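/- Let k be a field of characteristic zero and consider the derivations ∂_1 = y^c ∂/∂x and ∂_2 = x^d ∂/∂y of k[x,y] with integers c ≥ 1 and d > 1. Then the Lie algebra of derivations generated by ∂_1 and ∂_2 is infinite dimensional; in particular, ad(∂_1)^{d+1}(∂_2) = -c(d+1)!·y^e ∂/∂x where e = (d+1)c − 1 > c. -/

import Mathlib

open MvPolynomial

private lemma derF {k : Type*} [Field k]
    (F : Derivation k (MvPolynomial (Fin 2) k) (MvPolynomial (Fin 2) k))
    (lam : k) (m : ℕ) (hFx : F (X 0) = lam • (X 1) ^ m) (hFy : F (X 1) = 0) (a b : ℕ) :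
    F ((X 0) ^ a * (X 1) ^ b)
      = ((a : k) * lam) • ((X 0) ^ (a - 1) * (X 1) ^ (b + m)) := by
  rw [Derivation.leibniz, Derivation.leibniz_pow, Derivation.leibniz_pow, hFx, hFy]
  simp only [smul_eq_mul, smul_zero, mul_zero, zero_add, smul_eq_C_mul, nsmul_eq_mul, pow_add,
    map_mul, map_natCast]
  ring

private lemma key {k : Type*} [Field k] (d m : ℕ) (hm : 1 ≤ m) (lam : k)
    (F G : Derivation k (MvPolynomial (Fin 2) k) (MvPolynomial (Fin 2) k))
    (hFx : F (X 0) = lam • (X 1) ^ m) (hFy : F (X 1) = 0)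
    (hGx : G (X 0) = 0) (hGy : G (X 1) = (X 0) ^ d) :
    ∀ j, j ≤ d →
      ((fun D => ⁅F, D⁆)^[j + 1] G) (X 0)
        = (-(lam ^ (j + 1) * ((m * (j + 1) * d.descFactorial j : ℕ) : k))) •
            ((X 0 : MvPolynomial (Fin 2) k) ^ (d - j) * (X 1) ^ ((j + 1) * m - 1)) ∧
      ((fun D => ⁅F, D⁆)^[j + 1] G) (X 1)
        = (lam ^ (j + 1) * ((d.descFactorial (j + 1) : ℕ) : k)) •
            ((X 0 : MvPolynomial (Fin 2) k) ^ (d - (j + 1)) * (X 1) ^ ((j + 1) * m)) := by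
  intro j
  induction j with
  | zero =>
    intro _
    rw [Function.iterate_one]
    constructor
    · rw [Derivation.commutator_apply, hGx, map_zero, hFx, Derivation.map_smul, zero_sub]
      rw [Derivation.leibniz_pow, hGy]
      simp only [Nat.descFactorial_zero, Nat.mul_one, Nat.sub_zero, pow_one, one_mul,
        smul_eq_mul, smul_eq_C_mul, nsmul_eq_mul, map_mul, map_natCast, map_neg, map_one]
      have h1 : 1 * m - 1 = m - 1 := by omega
      rw [h1]
      ring
    · rw [Derivation.commutator_apply, hGy, hFy, map_zero, sub_zero]
      have : (X 0 : MvPolynomial (Fin 2) k) ^ d = (X 0) ^ d * (X 1) ^ 0 := by ring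
      rw [this, derF F lam m hFx hFy d 0]
      simp only [Nat.descFactorial_one, zero_add, pow_one, one_mul, smul_eq_C_mul,
        map_mul, map_natCast]
      ring
  | succ n ih =>
    intro hn1
    have hn : n ≤ d := by omega
    obtain ⟨ihx, ihy⟩ := ih hn
    rw [Function.iterate_succ_apply']
    have hEy : ∀ p q : ℕ, ((fun D => ⁅F, D⁆)^[n + 1] G) ((X 1) ^ q)
        = q • ((X 1 : MvPolynomial (Fin 2) k) ^ (q - 1)) •
            ((lam ^ (n + 1) * ((d.descFactorial (n + 1) : ℕ) : k)) •
            ((X 0 : MvPolynomial (Fin 2) k) ^ (d - (n + 1)) * (X 1) ^ ((n + 1) * m))) := by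
      intro p q
      rw [Derivation.leibniz_pow, ihy]
    constructor
    · rw [Derivation.commutator_apply, ihx, Derivation.map_smul, hFx, Derivation.map_smul,
        derF F lam m hFx hFy, hEy 0 m]
      have e1 : d - n - 1 = d - (n + 1) := by omega
      have e2 : (n + 1) * m - 1 + m = (n + 1 + 1) * m - 1 := by
        have : 1 ≤ (n + 1) * m := Nat.one_le_iff_ne_zero.2 (by positivity)
        have h : (n + 1 + 1) * m = (n + 1) * m + m := by ring
        omega
      have e3 : m - 1 + (n + 1) * m = (n + 1 + 1) * m - 1 := by
        have h : (n + 1 + 1) * m = (n + 1) * m + m := by ring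
        omega
      rw [e1, e2]
      have hdn : ((d - n : ℕ) : k) = (d : k) - (n : k) := by
        push_cast [Nat.cast_sub hn]; ring
      rw [Nat.descFactorial_succ d n]
      simp only [smul_eq_mul, smul_eq_C_mul, nsmul_eq_mul, pow_add, map_mul, map_natCast,
        map_neg, map_pow, hdn, map_sub]
      rw [← e3]
      simp only [pow_add, map_sub, map_natCast]
      push_cast [Nat.cast_sub hn, Nat.cast_sub hn1]
      ring
    · rw [Derivation.commutator_apply, ihy, Derivation.map_smul, hFy, Derivation.map_zero,
        sub_zero, derF F lam m hFx hFy]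
      have e1 : d - (n + 1) - 1 = d - (n + 1 + 1) := by omega
      have e2 : (n + 1) * m + m = (n + 1 + 1) * m := by ring
      rw [e1, e2, Nat.descFactorial_succ d (n + 1)]
      simp only [smul_eq_C_mul, map_mul, map_natCast, map_pow]
      push_cast [Nat.cast_sub hn1]
      ring

/-- For the derivations `∂₁ = y^c ∂/∂x` and `∂₂ = x^d ∂/∂y` of `k[x,y]` with
`c ≥ 1`, `d > 1`, the Lie algebra they generate is infinite dimensional; in
particular `ad(∂₁)^(d+1)(∂₂) = -c·(d+1)!·y^e ∂/∂x` where `e = (d+1)c - 1 > c`. -/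
theorem stmt_9 {k : Type*} [Field k] [CharZero k] (c d : ℕ) (hc : 1 ≤ c) (hd : 1 < d)
    (D₁ D₂ : Derivation k (MvPolynomial (Fin 2) k) (MvPolynomial (Fin 2) k))
    (h₁x : D₁ (X 0) = (X 1) ^ c) (h₁y : D₁ (X 1) = 0)
    (h₂x : D₂ (X 0) = 0) (h₂y : D₂ (X 1) = (X 0) ^ d) :
    ¬ Module.Finite k
        (LieSubalgebra.lieSpan k (Derivation k (MvPolynomial (Fin 2) k)
          (MvPolynomial (Fin 2) k)) {D₁, D₂}) ∧
    (d + 1) * c - 1 > c ∧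
    ((fun D => ⁅D₁, D⁆)^[d + 1] D₂) (X 0)
        = -((c * Nat.factorial (d + 1)) • (X 1 : MvPolynomial (Fin 2) k) ^ ((d + 1) * c - 1)) ∧
    ((fun D => ⁅D₁, D⁆)^[d + 1] D₂) (X 1) = 0 := by
  have hineq : ∀ m : ℕ, 1 ≤ m → m < (d + 1) * m - 1 := by
    intro m hm
    have h3 : 3 * m ≤ (d + 1) * m := Nat.mul_le_mul_right m (by omega)
    obtain ⟨t, ht⟩ : ∃ t, (d + 1) * m = t := ⟨_, rfl⟩
    rw [ht] at h3 ⊢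
    omega
  refine ⟨?_, hineq c hc, ?_, ?_⟩
  · -- infinite dimensionality
    set S := LieSubalgebra.lieSpan k (Derivation k (MvPolynomial (Fin 2) k)
      (MvPolynomial (Fin 2) k)) {D₁, D₂} with hS
    have hD₁S : D₁ ∈ S := LieSubalgebra.subset_lieSpan (by simp)
    have hD₂S : D₂ ∈ S := LieSubalgebra.subset_lieSpan (by simp)
    have hiter : ∀ (H : Derivation k (MvPolynomial (Fin 2) k) (MvPolynomial (Fin 2) k)),
        H ∈ S → ∀ j : ℕ, (fun D => ⁅H, D⁆)^[j] D₂ ∈ S := by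
      intro H hH j
      induction j with
      | zero => simpa using hD₂S
      | succ n ihn =>
        rw [Function.iterate_succ_apply']
        exact S.lie_mem hH ihn
    let M : ℕ → ℕ := fun n => Nat.rec c (fun _ mn => (d + 1) * mn - 1) n
    let F : ℕ → Derivation k (MvPolynomial (Fin 2) k) (MvPolynomial (Fin 2) k) :=
      fun n => Nat.rec D₁ (fun _ Fn => (fun D => ⁅Fn, D⁆)^[d + 1] D₂) n
    have hM1 : ∀ n, 1 ≤ M n := by
      intro n
      induction n with
      | zero => exact hc
      | succ n ihn =>
        show 1 ≤ (d + 1) * M n - 1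
        have := hineq (M n) ihn
        omega
    have hMlt : ∀ n, M n < M (n + 1) := fun n => hineq (M n) (hM1 n)
    have hMinj : Function.Injective M := (strictMono_nat_of_lt_succ hMlt).injective
    have hinv : ∀ n, F n (X 1) = 0 ∧ F n ∈ S ∧
        ∃ lam : k, lam ≠ 0 ∧ F n (X 0) = lam • (X 1) ^ (M n) := by
      intro n
      induction n with
      | zero => exact ⟨h₁y, hD₁S, 1, one_ne_zero, by rw [one_smul]; exact h₁x⟩
      | succ n ihn =>
        obtain ⟨hy, hmem, lam, hlam, hx⟩ := ihn
        obtain ⟨kx, ky⟩ := key d (M n) (hM1 n) lam (F n) D₂ hx hy h₂x h₂y d le_rfl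
        have hcoef : (M n * (d + 1) * d.descFactorial d : ℕ) ≠ 0 := by
          have h1 := hM1 n
          have h2 : d.descFactorial d ≠ 0 := by
            rw [Nat.descFactorial_self]; exact Nat.factorial_ne_zero d
          exact Nat.mul_ne_zero (Nat.mul_ne_zero (by omega) (by omega)) h2
        refine ⟨?_, hiter (F n) hmem (d + 1),
          -(lam ^ (d + 1) * ((M n * (d + 1) * d.descFactorial d : ℕ) : k)), ?_, ?_⟩
        · show ((fun D => ⁅F n, D⁆)^[d + 1] D₂) (X 1) = 0
          rw [ky]
          have : d.descFactorial (d + 1) = 0 := Nat.descFactorial_eq_zero_iff_lt.2 (by omega)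
          simp [this]
        · exact neg_ne_zero.2 (mul_ne_zero (pow_ne_zero _ hlam) (Nat.cast_ne_zero.2 hcoef))
        · show ((fun D => ⁅F n, D⁆)^[d + 1] D₂) (X 0) = _
          rw [kx]
          show _ = _ • (X 1 : MvPolynomial (Fin 2) k) ^ ((d + 1) * M n - 1)
          rw [Nat.sub_self, pow_zero, one_mul]
    choose lam hlam0 hlamx using fun n => (hinv n).2.2
    have hb : LinearIndependent k (fun n : ℕ => (X 1 : MvPolynomial (Fin 2) k) ^ (M n)) := by
      have heq : (fun n : ℕ => (X 1 : MvPolynomial (Fin 2) k) ^ (M n))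
          = (⇑(basisMonomials (Fin 2) k)) ∘ (fun n => Finsupp.single 1 (M n)) := by
        funext n
        simp [coe_basisMonomials, X_pow_eq_monomial]
      rw [heq]
      exact (basisMonomials (Fin 2) k).linearIndependent.comp _
        ((Finsupp.single_injective 1).comp hMinj)
    have hlb : LinearIndependent k
        (fun n : ℕ => lam n • (X 1 : MvPolynomial (Fin 2) k) ^ (M n)) := by
      have := hb.units_smul (fun n => Units.mk0 (lam n) (hlam0 n))
      exact this
    let ev : Derivation k (MvPolynomial (Fin 2) k) (MvPolynomial (Fin 2) k)
        →ₗ[k] MvPolynomial (Fin 2) k :=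
      { toFun := fun D => D (X 0)
        map_add' := fun a b => rfl
        map_smul' := fun r a => rfl }
    have hF : LinearIndependent k F := by
      apply LinearIndependent.of_comp ev
      have heq : ev ∘ F = fun n : ℕ => lam n • (X 1 : MvPolynomial (Fin 2) k) ^ (M n) :=
        funext fun n => hlamx n
      rw [heq]
      exact hlb
    have hG : LinearIndependent k (fun n : ℕ => (⟨F n, (hinv n).2.1⟩ : S)) := by
      apply LinearIndependent.of_comp (S : Submodule k (Derivation k
        (MvPolynomial (Fin 2) k) (MvPolynomial (Fin 2) k))).subtype
      exact hF
    intro hfin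
    haveI := hfin
    exact Module.Finite.not_linearIndependent_of_infinite _ hG
  · obtain ⟨kx, _⟩ := key d c hc 1 D₁ D₂ (by rw [one_smul]; exact h₁x) h₁y h₂x h₂y d le_rfl
    rw [kx]
    rw [Nat.sub_self, pow_zero, one_mul, Nat.descFactorial_self, one_pow, one_mul]
    have h1 : c * (d + 1) * d.factorial = c * (d + 1).factorial := by
      rw [Nat.factorial_succ]; ring
    rw [h1, neg_smul, Nat.cast_smul_eq_nsmul]
  · obtain ⟨_, ky⟩ := key d c hc 1 D₁ D₂ (by rw [one_smul]; exact h₁x) h₁y h₂x h₂y d le_rfl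
    rw [ky]
    have : d.descFactorial (d + 1) = 0 := Nat.descFactorial_eq_zero_iff_lt.2 (by omega)
    simp [this]
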